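/- arXiv:2206.13140 — 3 statements merged into one kernel-verified Lean document; each statement's English description precedes it below -/
import Mathlib

section
/- (Bias–variance decomposition of the ensemble risk.) Let z range over a finite set Z with weights q(z) summing to 1, let f_z be strictly positive probability mass functions on a finite set Y, let P be a probability mass function on Y, and define the geometric-mean ensemble q̃(y) = exp(∑_z q(z) log f_z(y)) / C with C = ∑_{y'} exp(∑_z q(z) log f_z(y')). Then ∑_z q(z) E_{y~P}[-log f_z(y)] = D_KL(P ‖ q̃) + ∑_z q(z) D_KL(q̃ ‖ f_z) + H(P). -/
open Real Finset

/-- Bias–variance decomposition of the ensemble risk: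
`∑_z q(z) E_{y~P}[-log f_z(y)] = D_KL(P‖q̃) + ∑_z q(z) D_KL(q̃‖f_z) + H(P)`,
where `q̃(y) = exp(∑_z q(z) log f_z(y)) / C` is the geometric-mean ensemble. -/
theorem stmt_3 {Y Z : Type*} [Fintype Y] [Fintype Z] [Nonempty Y]
    (q : Z → ℝ) (f : Z → Y → ℝ) (P : Y → ℝ)
    (hq : ∀ z, 0 ≤ q z) (hq1 : ∑ z, q z = 1)
    (hf : ∀ z y, 0 < f z y) (hf1 : ∀ z, ∑ y, f z y = 1)
    (hP : ∀ y, 0 < P y) (hP1 : ∑ y, P y = 1)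
    (C : ℝ) (hC : C = ∑ y', Real.exp (∑ z, q z * Real.log (f z y')))
    (qt : Y → ℝ) (hqt : ∀ y, qt y = Real.exp (∑ z, q z * Real.log (f z y)) / C) :
    ∑ z, q z * (∑ y, P y * (-Real.log (f z y))) =
      (∑ y, P y * Real.log (P y / qt y))
        + (∑ z, q z * (∑ y, qt y * Real.log (qt y / f z y)))
        + (-∑ y, P y * Real.log (P y)) := by
  set S : Y → ℝ := fun y => ∑ z, q z * Real.log (f z y) with hS
  have hC0 : 0 < C := by
    rw [hC]; exact Finset.sum_pos (fun y _ => Real.exp_pos _) Finset.univ_nonempty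
  have hqtpos : ∀ y, 0 < qt y := fun y => by rw [hqt]; positivity
  have hlog : ∀ y, Real.log (qt y) = S y - Real.log C := by
    intro y
    rw [hqt, Real.log_div (Real.exp_ne_zero _) hC0.ne', Real.log_exp]
  have hqt1 : ∑ y, qt y = 1 := by
    have : ∑ y, qt y = (∑ y, Real.exp (S y)) / C := by
      rw [Finset.sum_div]; exact Finset.sum_congr rfl fun y _ => hqt y
    rw [this, ← hC, div_self hC0.ne']
  have key1 : ∀ g : Y → ℝ,
      ∑ z, q z * ∑ y, g y * Real.log (f z y) = ∑ y, g y * S y := by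
    intro g
    simp_rw [Finset.mul_sum]
    rw [Finset.sum_comm]
    refine Finset.sum_congr rfl fun y _ => ?_
    rw [hS, Finset.mul_sum]
    exact Finset.sum_congr rfl fun z _ => by ring
  -- LHS
  have hL : ∑ z, q z * (∑ y, P y * (-Real.log (f z y))) = -∑ y, P y * S y := by
    have : ∀ z, (∑ y, P y * (-Real.log (f z y))) = -(∑ y, P y * Real.log (f z y)) := by
      intro z; rw [← Finset.sum_neg_distrib]; exact Finset.sum_congr rfl fun y _ => by ring
    simp_rw [this, mul_neg, Finset.sum_neg_distrib, key1]
  -- term 1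
  have h1 : ∑ y, P y * Real.log (P y / qt y)
      = ∑ y, P y * Real.log (P y) - ∑ y, P y * S y + Real.log C := by
    have : ∀ y, P y * Real.log (P y / qt y)
        = P y * Real.log (P y) - P y * S y + P y * Real.log C := by
      intro y
      rw [Real.log_div (hP y).ne' (hqtpos y).ne', hlog]; ring
    simp_rw [this, Finset.sum_add_distrib, Finset.sum_sub_distrib, ← Finset.sum_mul, hP1, one_mul]
  -- term 2
  have h2 : ∑ z, q z * (∑ y, qt y * Real.log (qt y / f z y)) = -Real.log C := by
    have hin : ∀ z, (∑ y, qt y * Real.log (qt y / f z y))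
        = (∑ y, qt y * S y) - Real.log C - ∑ y, qt y * Real.log (f z y) := by
      intro z
      have : ∀ y, qt y * Real.log (qt y / f z y)
          = (qt y * S y - qt y * Real.log C) - qt y * Real.log (f z y) := by
        intro y
        rw [Real.log_div (hqtpos y).ne' (hf z y).ne', hlog]; ring
      simp_rw [this, Finset.sum_sub_distrib, ← Finset.sum_mul, hqt1, one_mul]
    simp_rw [hin, mul_sub]
    rw [Finset.sum_sub_distrib, Finset.sum_sub_distrib, ← Finset.sum_mul, ← Finset.sum_mul,
      hq1, one_mul, one_mul, key1]
    ring
  rw [hL, h1, h2]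
  ring
end

section
/- (Bias–variance decomposition with noise averaging, Lemma for Theorem 1.) Let ε range over a finite set E with probability weights π(ε), let P_ε be probability mass functions on a finite set Y with mixture P̄ = ∑_ε π(ε) P_ε, let z range over a finite set Z with weights q(z), let f_z be strictly positive pmfs on Y, and let q̃(y) ∝ exp(∑_z q(z) log f_z(y)). Then ∑_ε π(ε) ∑_z q(z) D_KL(P_ε ‖ f_z) = D_KL(P̄ ‖ q̃) + ∑_z q(z) D_KL(q̃ ‖ f_z) + I, where I = ∑_ε π(ε) D_KL(P_ε ‖ P̄) is the mutual information between Y and ε. -/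
open Real Finset

/-- Swap sums: `∑_z q z * ∑_y g y * h z y = ∑_y g y * ∑_z q z * h z y`. -/
lemma swap_aux1 {Y Z : Type*} [Fintype Y] [Fintype Z] (q : Z → ℝ) (g : Y → ℝ)
    (h : Z → Y → ℝ) :
    ∑ z, q z * ∑ y, g y * h z y = ∑ y, g y * ∑ z, q z * h z y := by
  simp_rw [Finset.mul_sum]
  rw [Finset.sum_comm]
  refine Finset.sum_congr rfl fun y _ => Finset.sum_congr rfl fun z _ => by ring

/-- Swap sums: `∑_e pi e * ∑_y Pd e y * c y = ∑_y (∑_e pi e * Pd e y) * c y`. -/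
lemma swap_aux2 {Y E : Type*} [Fintype Y] [Fintype E] (pi : E → ℝ) (Pd : E → Y → ℝ)
    (c : Y → ℝ) :
    ∑ e, pi e * ∑ y, Pd e y * c y = ∑ y, (∑ e, pi e * Pd e y) * c y := by
  simp_rw [Finset.mul_sum, Finset.sum_mul]
  rw [Finset.sum_comm]
  refine Finset.sum_congr rfl fun y _ => Finset.sum_congr rfl fun e _ => by ring

/-- Bias–variance decomposition with noise averaging (Lemma for Theorem 1):
`∑_ε pi(ε) ∑_z q(z) D_KL(P_ε‖f_z)
  = D_KL(P̄‖q̃) + ∑_z q(z) D_KL(q̃‖f_z) + ∑_ε pi(ε) D_KL(P_ε‖P̄)`. -/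
theorem stmt_5 {Y Z E : Type*} [Fintype Y] [Fintype Z] [Fintype E] [Nonempty Y]
    (pi : E → ℝ) (Pd : E → Y → ℝ) (q : Z → ℝ) (f : Z → Y → ℝ)
    (hpi : ∀ e, 0 ≤ pi e) (hpi1 : ∑ e, pi e = 1)
    (hPd : ∀ e y, 0 < Pd e y) (hPd1 : ∀ e, ∑ y, Pd e y = 1)
    (hq : ∀ z, 0 ≤ q z) (hq1 : ∑ z, q z = 1)
    (hf : ∀ z y, 0 < f z y) (hf1 : ∀ z, ∑ y, f z y = 1)
    (Pbar : Y → ℝ) (hPbar : ∀ y, Pbar y = ∑ e, pi e * Pd e y)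
    (qt : Y → ℝ)
    (hqt : ∀ y, qt y = Real.exp (∑ z, q z * Real.log (f z y)) /
      ∑ y', Real.exp (∑ z, q z * Real.log (f z y'))) :
    ∑ e, pi e * (∑ z, q z * (∑ y, Pd e y * Real.log (Pd e y / f z y))) =
      (∑ y, Pbar y * Real.log (Pbar y / qt y))
        + (∑ z, q z * (∑ y, qt y * Real.log (qt y / f z y)))
        + (∑ e, pi e * (∑ y, Pd e y * Real.log (Pd e y / Pbar y))) := by
  classical
  set S : Y → ℝ := fun y => ∑ z, q z * Real.log (f z y) with hS
  set C : ℝ := ∑ y', Real.exp (S y') with hC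
  have hCpos : 0 < C := Finset.sum_pos (fun y _ => Real.exp_pos _) Finset.univ_nonempty
  have hqt' : ∀ y, qt y = Real.exp (S y) / C := fun y => hqt y
  have hqtpos : ∀ y, 0 < qt y := fun y => by
    rw [hqt' y]; positivity
  have hlogqt : ∀ y, Real.log (qt y) = S y - Real.log C := by
    intro y
    rw [hqt' y, Real.log_div (Real.exp_ne_zero _) (ne_of_gt hCpos), Real.log_exp]
  have hqtsum : ∑ y, qt y = 1 := by
    simp only [hqt']
    rw [← Finset.sum_div]
    exact div_self (ne_of_gt hCpos)
  obtain ⟨e0, he0⟩ : ∃ e, 0 < pi e := by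
    by_contra h
    push_neg at h
    have h0 : ∑ e, pi e = 0 :=
      Finset.sum_eq_zero (fun e _ => le_antisymm (h e) (hpi e))
    rw [h0] at hpi1
    norm_num at hpi1
  have hPbarpos : ∀ y, 0 < Pbar y := by
    intro y
    rw [hPbar y]
    exact Finset.sum_pos' (fun e _ => mul_nonneg (hpi e) (le_of_lt (hPd e y)))
      ⟨e0, Finset.mem_univ e0, mul_pos he0 (hPd e0 y)⟩
  have hPbarsum : ∑ y, Pbar y = 1 := by
    simp only [hPbar]
    rw [Finset.sum_comm]
    have : ∀ e, ∑ y, pi e * Pd e y = pi e := by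
      intro e
      rw [← Finset.mul_sum, hPd1 e, mul_one]
    simp only [this, hpi1]
  -- LHS computation
  have hL : ∑ e, pi e * (∑ z, q z * (∑ y, Pd e y * Real.log (Pd e y / f z y)))
      = (∑ e, pi e * ∑ y, Pd e y * Real.log (Pd e y)) - ∑ y, Pbar y * S y := by
    have hinner : ∀ e, (∑ z, q z * (∑ y, Pd e y * Real.log (Pd e y / f z y)))
        = (∑ y, Pd e y * Real.log (Pd e y)) - ∑ y, Pd e y * S y := by
      intro e
      have expand : ∀ z, (∑ y, Pd e y * Real.log (Pd e y / f z y))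
          = (∑ y, Pd e y * Real.log (Pd e y)) - ∑ y, Pd e y * Real.log (f z y) := by
        intro z
        rw [← Finset.sum_sub_distrib]
        refine Finset.sum_congr rfl fun y _ => ?_
        rw [Real.log_div (ne_of_gt (hPd e y)) (ne_of_gt (hf z y))]
        ring
      simp only [expand, mul_sub]
      rw [Finset.sum_sub_distrib, ← Finset.sum_mul, hq1, one_mul,
        swap_aux1 q (fun y => Pd e y) (fun z y => Real.log (f z y))]
    simp only [hinner, mul_sub]
    rw [Finset.sum_sub_distrib, swap_aux2 pi Pd S]
    congr 1
    exact Finset.sum_congr rfl fun y _ => by rw [← hPbar y]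
  -- first RHS term
  have hT1 : (∑ y, Pbar y * Real.log (Pbar y / qt y))
      = (∑ y, Pbar y * Real.log (Pbar y)) - (∑ y, Pbar y * S y) + Real.log C := by
    have expand : ∀ y, Pbar y * Real.log (Pbar y / qt y)
        = Pbar y * Real.log (Pbar y) - Pbar y * S y + Pbar y * Real.log C := by
      intro y
      rw [Real.log_div (ne_of_gt (hPbarpos y)) (ne_of_gt (hqtpos y)), hlogqt y]
      ring
    simp only [expand]
    rw [Finset.sum_add_distrib, Finset.sum_sub_distrib, ← Finset.sum_mul, hPbarsum,
      one_mul]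
  -- second RHS term
  have hT2 : (∑ z, q z * (∑ y, qt y * Real.log (qt y / f z y))) = - Real.log C := by
    have expand : ∀ z, (∑ y, qt y * Real.log (qt y / f z y))
        = (∑ y, qt y * S y) - Real.log C - ∑ y, qt y * Real.log (f z y) := by
      intro z
      have e1 : ∀ y, qt y * Real.log (qt y / f z y)
          = qt y * S y - qt y * Real.log C - qt y * Real.log (f z y) := by
        intro y
        rw [Real.log_div (ne_of_gt (hqtpos y)) (ne_of_gt (hf z y)), hlogqt y]
        ring
      simp only [e1]
      rw [Finset.sum_sub_distrib, Finset.sum_sub_distrib, ← Finset.sum_mul, hqtsum,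
        one_mul]
    simp only [expand, mul_sub]
    rw [Finset.sum_sub_distrib, Finset.sum_sub_distrib, ← Finset.sum_mul, hq1, one_mul,
      ← Finset.sum_mul, hq1, one_mul,
      swap_aux1 q qt (fun z y => Real.log (f z y))]
    ring
  -- third RHS term
  have hT3 : (∑ e, pi e * (∑ y, Pd e y * Real.log (Pd e y / Pbar y)))
      = (∑ e, pi e * ∑ y, Pd e y * Real.log (Pd e y))
        - ∑ y, Pbar y * Real.log (Pbar y) := by
    have expand : ∀ e, (∑ y, Pd e y * Real.log (Pd e y / Pbar y))
        = (∑ y, Pd e y * Real.log (Pd e y)) - ∑ y, Pd e y * Real.log (Pbar y) := by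
      intro e
      rw [← Finset.sum_sub_distrib]
      refine Finset.sum_congr rfl fun y _ => ?_
      rw [Real.log_div (ne_of_gt (hPd e y)) (ne_of_gt (hPbarpos y))]
      ring
    simp only [expand, mul_sub]
    rw [Finset.sum_sub_distrib, swap_aux2 pi Pd (fun y => Real.log (Pbar y))]
    congr 1
    exact Finset.sum_congr rfl fun y _ => by rw [← hPbar y]
  rw [hL, hT1, hT2, hT3]
  ring
end

section
/- (Nested Dropout information ordering, Theorem 2 part (ii).) Let Y and Z̃_1,...,Z̃_K be jointly distributed finite random variables with exchangeable (Y, Z̃)-law as above, let ε_1,...,ε_{K-1} be auxiliary independent 0/1 variables (independent of (Y, Z̃)) defined recursively by ε_0 = 1, ε_i = Bernoulli(η_i) if ε_{i-1}=1 and ε_i = 0 otherwise, and define Z_1 = Z̃_1 and Z_k = (∏_{j=1}^{k-1} ε_j) Z̃_k for k ≥ 2 (with 0 a designated masking value). Then I(Y; Z_1) ≥ I(Y; Z_2) ≥ ... ≥ I(Y; Z_K). -/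
open Real Finset
open scoped Classical

noncomputable section

/-- Joint pmf of `(U, V)` under a pmf `P` on a finite sample space `Ω`. -/
def jointP {Ω α β : Type*} [Fintype Ω] (P : Ω → ℝ) (U : Ω → α) (V : Ω → β)
    (u : α) (v : β) : ℝ :=
  ∑ ω, if U ω = u ∧ V ω = v then P ω else 0

/-- Mutual information `I(U;V)` for a finite-valued `U` and a real-valued `V`
(summing over the finite image of `V`). -/
def MIr {Ω α : Type*} [Fintype Ω] [Fintype α] (P : Ω → ℝ) (U : Ω → α)
    (V : Ω → ℝ) : ℝ :=
  ∑ u, ∑ v ∈ Finset.image V Finset.univ, jointP P U V u v *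
    Real.log (jointP P U V u v /
      ((∑ v' ∈ Finset.image V Finset.univ, jointP P U V u v') *
        (∑ u', jointP P U V u' v)))

section Helpers

variable {Ω : Type*} [Fintype Ω]

lemma ite_and_flat {A B : Prop} (c : ℝ) :
    (if A then (if B then c else 0) else 0) = if A ∧ B then c else 0 := by
  by_cases hA : A <;> by_cases hB : B <;> simp [hA, hB]

lemma ite_congr_prop {A B : Prop} (h : A ↔ B) (c : ℝ) :
    (if A then c else 0) = if B then c else 0 := by
  by_cases hA : A
  · rw [if_pos hA, if_pos (h.1 hA)]
  · rw [if_neg hA, if_neg (fun hB => hA (h.2 hB))]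


lemma ite_nested_iff {A M R : Prop} {dA : Decidable A} {dM : Decidable M}
    {dR : Decidable R} (h : A ↔ (M ∧ R)) (c : ℝ) :
    @ite ℝ A dA c 0 = @ite ℝ M dM (@ite ℝ R dR c 0) 0 := by
  by_cases hM : M
  · by_cases hR : R
    · rw [if_pos (h.2 ⟨hM, hR⟩), if_pos hM, if_pos hR]
    · rw [if_neg (fun hA => hR (h.1 hA).2), if_pos hM, if_neg hR]
  · rw [if_neg (fun hA => hM (h.1 hA).1), if_neg hM]

lemma ite_iff' {A B : Prop} {dA : Decidable A} {dB : Decidable B} (h : A ↔ B) (c : ℝ) :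
    @ite ℝ A dA c 0 = @ite ℝ B dB c 0 := by
  by_cases hA : A
  · rw [if_pos hA, if_pos (h.1 hA)]
  · rw [if_neg hA, if_neg (fun hB => hA (h.2 hB))]

lemma sum_ite_icongr {Ω : Type*} [Fintype Ω] {A B : Ω → Prop}
    {dA : ∀ ω, Decidable (A ω)} {dB : ∀ ω, Decidable (B ω)}
    (f : Ω → ℝ) (h : ∀ ω, A ω ↔ B ω) :
    (∑ ω, @ite ℝ (A ω) (dA ω) (f ω) 0) = ∑ ω, @ite ℝ (B ω) (dB ω) (f ω) 0 :=
  Finset.sum_congr rfl fun ω _ => ite_iff' (h ω) _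

lemma ite_nonneg0 {A : Prop} {dA : Decidable A} {x : ℝ} (hx : 0 ≤ x) :
    0 ≤ @ite ℝ A dA x 0 := by
  by_cases h : A
  · rw [if_pos h]; exact hx
  · rw [if_neg h]

lemma collapse_sum (s : Finset ℕ) (F : ℕ → Finset ℝ) (x : ℕ → ℝ)
    (hx : ∀ i ∈ s, x i ∈ F i) (Φ : (ℕ → ℝ) → ℝ) :
    ∑ τ ∈ s.pi F,
      (if ∀ i ∈ s, x i = (fun j => if h : j ∈ s then τ j h else 0) i
        then Φ (fun j => if h : j ∈ s then τ j h else 0) else 0)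
      = Φ (fun j => if h : j ∈ s then x j else 0) := by
  rw [Finset.sum_eq_single_of_mem (fun i _ => x i)
      (Finset.mem_pi.2 fun i hi => hx i hi)]
  · rw [if_pos]
    intro i hi
    simp [hi]
  · intro τ hτ hne
    rw [if_neg]
    intro hc
    apply hne
    funext i hi
    have h2 := hc i hi
    simp only [dif_pos hi] at h2
    exact h2.symm

lemma key_general (P : Ω → ℝ) (s : Finset ℕ) (F : ℕ → Finset ℝ)
    (x : Ω → ℕ → ℝ) (hx : ∀ ω, ∀ i ∈ s, x ω i ∈ F i)
    (Q : (ℕ → ℝ) → Prop) (c : Ω → ℝ) :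
    ∑ τ ∈ s.pi F, ∑ ω,
      (if (∀ i ∈ s, x ω i = (fun j => if h : j ∈ s then τ j h else 0) i) ∧
          Q (fun j => if h : j ∈ s then τ j h else 0) then c ω else 0)
      = ∑ ω, if Q (fun j => if h : j ∈ s then x ω j else 0) then c ω else 0 := by
  rw [Finset.sum_comm]
  refine Finset.sum_congr rfl fun ω _ => ?_
  rw [← collapse_sum s F (x ω) (hx ω) (fun f => if Q f then c ω else 0)]
  refine Finset.sum_congr rfl fun τ _ => ?_
  by_cases h1 : (∀ i ∈ s, x ω i = (fun j => if h : j ∈ s then τ j h else 0) i) <;>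
    by_cases h2 : Q (fun j => if h : j ∈ s then τ j h else 0) <;> simp [h1, h2]

lemma marg_general (P : Ω → ℝ) (s : Finset ℕ) (F : ℕ → Finset ℝ)
    (x x' : Ω → ℕ → ℝ) (hx : ∀ ω, ∀ i ∈ s, x ω i ∈ F i)
    (hx' : ∀ ω, ∀ i ∈ s, x' ω i ∈ F i)
    (Q : (ℕ → ℝ) → Prop) (c d : Ω → ℝ) (C : ℝ)
    (hid : ∀ τ ∈ s.pi F,
      (∑ ω, if (∀ i ∈ s, x ω i = (fun j => if h : j ∈ s then τ j h else 0) i)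
          then c ω else 0)
        = C * ∑ ω, if (∀ i ∈ s, x' ω i = (fun j => if h : j ∈ s then τ j h else 0) i)
          then d ω else 0) :
    (∑ ω, if Q (fun j => if h : j ∈ s then x ω j else 0) then c ω else 0)
      = C * ∑ ω, if Q (fun j => if h : j ∈ s then x' ω j else 0) then d ω else 0 := by
  rw [← key_general P s F x hx Q c, ← key_general P s F x' hx' Q d, Finset.mul_sum]
  refine Finset.sum_congr rfl fun τ hτ => ?_
  by_cases hQ : Q (fun j => if h : j ∈ s then τ j h else 0)
  · simpa [hQ] using hid τ hτ
  · simp [hQ]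

lemma jointP_nonneg {α β : Type*} (P : Ω → ℝ) (hP : ∀ ω, 0 ≤ P ω)
    (U : Ω → α) (V : Ω → β) (u : α) (v : β) : 0 ≤ jointP P U V u v :=
  Finset.sum_nonneg fun ω _ => by by_cases h : U ω = u ∧ V ω = v <;> simp [h, hP ω]

lemma jointP_not_mem {α : Type*} (P : Ω → ℝ) (U : Ω → α) (V : Ω → ℝ) (u : α)
    {z : ℝ} (hz : z ∉ Finset.image V Finset.univ) : jointP P U V u z = 0 := by
  refine Finset.sum_eq_zero fun ω _ => ?_
  rw [if_neg]
  rintro ⟨-, h⟩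
  exact hz (h ▸ Finset.mem_image_of_mem V (Finset.mem_univ ω))

lemma jointP_row {α : Type*} (P : Ω → ℝ) (U : Ω → α) (V : Ω → ℝ) (u : α)
    (T : Finset ℝ) (hT : ∀ ω, V ω ∈ T) :
    ∑ z ∈ T, jointP P U V u z = ∑ ω, if U ω = u then P ω else 0 := by
  unfold jointP
  rw [Finset.sum_comm]
  refine Finset.sum_congr rfl fun ω _ => ?_
  have : ∀ z ∈ T, (if U ω = u ∧ V ω = z then P ω else 0)
      = if z = V ω then (if U ω = u then P ω else 0) else 0 := by
    intro z _
    by_cases h1 : U ω = u <;> by_cases h2 : z = V ω <;> simp [h1, h2, eq_comm]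
  rw [Finset.sum_congr rfl this, Finset.sum_ite_eq' T (V ω)
    (fun _ => if U ω = u then P ω else 0), if_pos (hT ω)]

end Helpers

section Analysis

lemma log_ineq (x y : ℝ) (hx : 0 ≤ x) (hy : 0 ≤ y) (h : x ≠ 0 → 0 < y) :
    x - y ≤ x * Real.log (x / y) := by
  rcases eq_or_lt_of_le hx with h0 | h0
  · rw [← h0, zero_mul, zero_sub]
    linarith
  · have hy' : 0 < y := h (ne_of_gt h0)
    have hlog : Real.log (y / x) ≤ y / x - 1 :=
      Real.log_le_sub_one_of_pos (div_pos hy' h0)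
    have hinv : Real.log (x / y) = - Real.log (y / x) := by
      rw [← Real.log_inv, inv_div]
    have h2 : x * Real.log (y / x) ≤ x * (y / x - 1) :=
      mul_le_mul_of_nonneg_left hlog (le_of_lt h0)
    have h3 : x * (y / x - 1) = y - x := by
      field_simp
    rw [hinv]
    nlinarith

lemma lam_cancel (lam x c : ℝ) (h : 0 ≤ lam) :
    (lam * x) * Real.log ((lam * x) / (lam * c)) = lam * (x * Real.log (x / c)) := by
  rcases eq_or_lt_of_le h with h0 | h0
  · rw [← h0]; simp
  · rw [mul_div_mul_left x c (ne_of_gt h0)]; ring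

lemma logsum2 (a a' b : ℝ) (ha : 0 ≤ a) (ha' : 0 ≤ a') (hb : 0 ≤ b)
    (h : a' = 0 → a = 0) :
    (a + b) * Real.log ((a + b) / (a' + b)) ≤ a * Real.log (a / a') := by
  rcases eq_or_lt_of_le hb with hb0 | hb0
  · rw [← hb0, add_zero, add_zero]
  rcases eq_or_lt_of_le ha' with ha'0 | ha'0
  · have ha0 : a = 0 := h ha'0.symm
    rw [ha0, ← ha'0]
    simp [hb0.ne']
  rcases eq_or_lt_of_le ha with ha0 | ha0
  · rw [← ha0, zero_add, zero_mul]
    apply mul_nonpos_of_nonneg_of_nonpos (le_of_lt hb0)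
    apply Real.log_nonpos (by positivity)
    rw [div_le_one (by positivity)]
    linarith
  · set s : ℝ := (a + b) / (a' + b) with hs
    have hspos : 0 < s := by positivity
    have key1 : a - a' * s ≤ a * Real.log (a / (a' * s)) :=
      log_ineq a (a' * s) (le_of_lt ha0) (by positivity) (fun _ => by positivity)
    have key2 : b - b * s ≤ b * Real.log (b / (b * s)) :=
      log_ineq b (b * s) (le_of_lt hb0) (by positivity) (fun _ => by positivity)
    have e1 : Real.log (a / (a' * s)) = Real.log (a / a') - Real.log s := by
      rw [div_mul_eq_div_div, Real.log_div (by positivity) (ne_of_gt hspos)]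
    have e2 : Real.log (b / (b * s)) = - Real.log s := by
      have hbs : b / (b * s) = s⁻¹ := by
        field_simp
      rw [hbs, Real.log_inv]
    have e3 : a - a' * s + (b - b * s) = 0 := by
      have : s * (a' + b) = a + b := by
        rw [hs]; field_simp
      nlinarith
    rw [e1] at key1
    rw [e2] at key2
    nlinarith

lemma analytic {𝒴 : Type*} [Fintype 𝒴] (T : Finset ℝ) (h0T : (0:ℝ) ∈ T)
    (p q : 𝒴 → ℝ → ℝ) (w : 𝒴 → ℝ) (lam : ℝ)
    (hp0 : ∀ y z, 0 ≤ p y z) (hw : ∀ y, 0 ≤ w y)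
    (hl0 : 0 ≤ lam) (hl1 : lam ≤ 1)
    (hrowp : ∀ y, ∑ z ∈ T, p y z = w y)
    (hrowq : ∀ y, ∑ z ∈ T, q y z = w y)
    (hw1 : ∑ y, w y = 1)
    (hq : ∀ y z, z ∈ T → z ≠ 0 → q y z = lam * p y z) :
    (∑ y, ∑ z ∈ T, q y z * Real.log (q y z / (w y * ∑ y', q y' z)))
      ≤ ∑ y, ∑ z ∈ T, p y z * Real.log (p y z / (w y * ∑ y', p y' z)) := by
  have herase : ∀ y, ∑ z ∈ T.erase 0, q y z = lam * ∑ z ∈ T.erase 0, p y z := by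
    intro y
    rw [Finset.mul_sum]
    exact Finset.sum_congr rfl fun z hz =>
      hq y z (Finset.mem_of_mem_erase hz) (Finset.ne_of_mem_erase hz)
  have hq0' : ∀ y, q y 0 = lam * p y 0 + (1 - lam) * w y := by
    intro y
    have e1 : q y 0 + ∑ z ∈ T.erase 0, q y z = w y := by
      rw [Finset.add_sum_erase T _ h0T]; exact hrowq y
    have e2 : p y 0 + ∑ z ∈ T.erase 0, p y z = w y := by
      rw [Finset.add_sum_erase T _ h0T]; exact hrowp y
    have := herase y
    nlinarith [e1, e2, this]
  have hqc0 : (∑ y', q y' 0) = lam * (∑ y', p y' 0) + (1 - lam) := by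
    rw [Finset.sum_congr rfl (fun y _ => hq0' y), Finset.sum_add_distrib,
      ← Finset.mul_sum, ← Finset.mul_sum, hw1, mul_one]
  have hqc : ∀ z, z ∈ T → z ≠ 0 → (∑ y', q y' z) = lam * ∑ y', p y' z := by
    intro z hz hz0
    rw [Finset.mul_sum]
    exact Finset.sum_congr rfl fun y _ => hq y z hz hz0
  have hpc0 : ∀ z : ℝ, 0 ≤ ∑ y', p y' z := fun z =>
    Finset.sum_nonneg fun y' _ => hp0 y' z
  have hplew : ∀ y z, z ∈ T → p y z ≤ w y := fun y z hz =>
    hrowp y ▸ Finset.single_le_sum (fun z' _ => hp0 y z') hz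
  have hppc : ∀ y z, p y z ≤ ∑ y', p y' z := fun y z =>
    Finset.single_le_sum (fun y' _ => hp0 y' z) (Finset.mem_univ y)
  have hMIp : 0 ≤ ∑ y, ∑ z ∈ T, p y z * Real.log (p y z / (w y * ∑ y', p y' z)) := by
    have per : ∀ y, ∀ z ∈ T, p y z - w y * (∑ y', p y' z)
        ≤ p y z * Real.log (p y z / (w y * ∑ y', p y' z)) := by
      intro y z hz
      refine log_ineq _ _ (hp0 y z) (mul_nonneg (hw y) (hpc0 z)) fun hne => ?_
      have hp : 0 < p y z := lt_of_le_of_ne (hp0 y z) (Ne.symm hne)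
      exact mul_pos (lt_of_lt_of_le hp (hplew y z hz)) (lt_of_lt_of_le hp (hppc y z))
    have s1 : ∑ y, ∑ z ∈ T, p y z = 1 := by
      rw [Finset.sum_congr rfl fun y _ => hrowp y]; exact hw1
    have s2 : ∑ y, ∑ z ∈ T, w y * (∑ y', p y' z) = 1 := by
      have e : ∀ y : 𝒴, ∑ z ∈ T, w y * (∑ y', p y' z) = w y * ∑ z ∈ T, ∑ y', p y' z :=
        fun y => (Finset.mul_sum _ _ _).symm
      rw [Finset.sum_congr rfl fun y _ => e y]
      have e2 : ∑ z ∈ T, ∑ y', p y' z = 1 := by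
        rw [Finset.sum_comm, Finset.sum_congr rfl fun y _ => hrowp y]; exact hw1
      rw [Finset.sum_congr rfl fun y (_ : y ∈ Finset.univ) => by rw [e2, mul_one]]
      exact hw1
    have hle : ∑ y, ∑ z ∈ T, (p y z - w y * (∑ y', p y' z))
        ≤ ∑ y, ∑ z ∈ T, p y z * Real.log (p y z / (w y * ∑ y', p y' z)) :=
      Finset.sum_le_sum fun y _ => Finset.sum_le_sum fun z hz => per y z hz
    have : ∑ y, ∑ z ∈ T, (p y z - w y * (∑ y', p y' z)) = 0 := by
      rw [Finset.sum_congr rfl fun y (_ : y ∈ Finset.univ) => Finset.sum_sub_distrib _ _,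
        Finset.sum_sub_distrib, s1, s2, sub_self]
    linarith
  have main : (∑ y, ∑ z ∈ T, q y z * Real.log (q y z / (w y * ∑ y', q y' z)))
      ≤ lam * ∑ y, ∑ z ∈ T, p y z * Real.log (p y z / (w y * ∑ y', p y' z)) := by
    rw [Finset.mul_sum]
    refine Finset.sum_le_sum fun y _ => ?_
    rw [← Finset.add_sum_erase T _ h0T, ← Finset.add_sum_erase T
      (fun z => p y z * Real.log (p y z / (w y * ∑ y', p y' z))) h0T, mul_add]
    have hterm : ∀ z ∈ T.erase 0,
        q y z * Real.log (q y z / (w y * ∑ y', q y' z))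
          = lam * (p y z * Real.log (p y z / (w y * ∑ y', p y' z))) := by
      intro z hz
      have hzT := Finset.mem_of_mem_erase hz
      have hz0 := Finset.ne_of_mem_erase hz
      rw [hq y z hzT hz0, hqc z hzT hz0,
        show w y * (lam * ∑ y', p y' z) = lam * (w y * ∑ y', p y' z) by ring,
        lam_cancel _ _ _ hl0]
    have hsum2 : ∑ z ∈ T.erase 0, q y z * Real.log (q y z / (w y * ∑ y', q y' z))
        = lam * ∑ z ∈ T.erase 0, p y z * Real.log (p y z / (w y * ∑ y', p y' z)) := by
      rw [Finset.mul_sum]; exact Finset.sum_congr rfl hterm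
    have hterm0 : q y 0 * Real.log (q y 0 / (w y * ∑ y', q y' 0))
        ≤ lam * (p y 0 * Real.log (p y 0 / (w y * ∑ y', p y' 0))) := by
      have hab : q y 0 = lam * p y 0 + (1 - lam) * w y := hq0' y
      have hab' : w y * (∑ y', q y' 0) = lam * (w y * ∑ y', p y' 0) + (1 - lam) * w y := by
        rw [hqc0]; ring
      have himp : lam * (w y * ∑ y', p y' 0) = 0 → lam * p y 0 = 0 := by
        intro h0
        rcases mul_eq_zero.1 h0 with hl | hwp
        · rw [hl, zero_mul]
        · rcases mul_eq_zero.1 hwp with hw0 | hpc00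
          · have : p y 0 ≤ 0 := by have h2 := hplew y 0 h0T; rw [hw0] at h2; exact h2
            rw [le_antisymm this (hp0 y 0), mul_zero]
          · have : p y 0 ≤ 0 := by have h2 := hppc y 0; rw [hpc00] at h2; exact h2
            rw [le_antisymm this (hp0 y 0), mul_zero]
      have hls := logsum2 (lam * p y 0) (lam * (w y * ∑ y', p y' 0)) ((1 - lam) * w y)
        (mul_nonneg hl0 (hp0 y 0))
        (mul_nonneg hl0 (mul_nonneg (hw y) (hpc0 0)))
        (mul_nonneg (by linarith) (hw y)) himp
      rw [hab, hab']
      calc (lam * p y 0 + (1 - lam) * w y) *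
            Real.log ((lam * p y 0 + (1 - lam) * w y) /
              (lam * (w y * ∑ y', p y' 0) + (1 - lam) * w y))
          ≤ (lam * p y 0) * Real.log ((lam * p y 0) / (lam * (w y * ∑ y', p y' 0))) := hls
        _ = lam * (p y 0 * Real.log (p y 0 / (w y * ∑ y', p y' 0))) := lam_cancel _ _ _ hl0
    rw [hsum2]
    exact add_le_add hterm0 le_rfl
  nlinarith [main, hMIp, hl1]

lemma MIr_eq {Ω 𝒴 : Type*} [Fintype Ω] [Fintype 𝒴] (P : Ω → ℝ) (U : Ω → 𝒴)
    (V : Ω → ℝ) (T : Finset ℝ) (hT : Finset.image V Finset.univ ⊆ T) :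
    MIr P U V = ∑ u, ∑ z ∈ T, jointP P U V u z *
      Real.log (jointP P U V u z /
        ((∑ ω, if U ω = u then P ω else 0) * ∑ u', jointP P U V u' z)) := by
  unfold MIr
  refine Finset.sum_congr rfl fun u _ => ?_
  rw [jointP_row P U V u (Finset.image V Finset.univ)
    (fun ω => Finset.mem_image_of_mem V (Finset.mem_univ ω))]
  refine Finset.sum_subset hT fun z _ hnz => ?_
  rw [jointP_not_mem P U V u hnz, zero_mul]

end Analysis

/-- Nested Dropout information ordering (Theorem 2(ii)): with exchangeable
channels `Z̃_1, ..., Z̃_K`, an independent stopping chain of Bernoulli masks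
`ε_1, ..., ε_{K-1}`, and masked channels `Z_k = (∏_{j=1}^{k-1} ε_j) Z̃_k`,
the mutual informations are ordered: `I(Y; Z_1) ≥ I(Y; Z_2) ≥ ... ≥ I(Y; Z_K)`. -/
theorem stmt_9 {Ω 𝒴 : Type*} [Fintype Ω] [Fintype 𝒴]
    (K : ℕ) (hK : 2 ≤ K)
    (P : Ω → ℝ) (hP : ∀ ω, 0 ≤ P ω) (hP1 : ∑ ω, P ω = 1)
    (Y : Ω → 𝒴) (Zt : ℕ → Ω → ℝ)
    (hexch : ∀ σ : Equiv.Perm ℕ, (∀ j, j ∉ Finset.Icc 1 K → σ j = j) →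
      ∀ (y : 𝒴) (v : ℕ → ℝ),
        (∑ ω, if Y ω = y ∧ ∀ k ∈ Finset.Icc 1 K, Zt (σ k) ω = v k then P ω else 0) =
          (∑ ω, if Y ω = y ∧ ∀ k ∈ Finset.Icc 1 K, Zt k ω = v k then P ω else 0))
    (ε : ℕ → Ω → ℝ) (η : ℕ → ℝ)
    (hε0 : ∀ ω, ε 0 ω = 1)
    (hε01 : ∀ i ω, ε i ω = 0 ∨ ε i ω = 1)
    (hchain : ∀ i ω, 1 ≤ i → ε i ω = 1 → ε (i - 1) ω = 1)
    (hBer : ∀ i, 1 ≤ i → i ≤ K - 1 →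
      (∑ ω, if ε i ω = 1 ∧ ε (i - 1) ω = 1 then P ω else 0) =
        η i * ∑ ω, if ε (i - 1) ω = 1 then P ω else 0)
    (hindep : ∀ (e : ℕ → ℝ) (y : 𝒴) (v : ℕ → ℝ),
      (∑ ω, if (∀ i ∈ Finset.Icc 1 (K - 1), ε i ω = e i) ∧ Y ω = y ∧
          (∀ k ∈ Finset.Icc 1 K, Zt k ω = v k) then P ω else 0) =
        (∑ ω, if (∀ i ∈ Finset.Icc 1 (K - 1), ε i ω = e i) then P ω else 0) *
          (∑ ω, if Y ω = y ∧ (∀ k ∈ Finset.Icc 1 K, Zt k ω = v k) then P ω else 0))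
    (Z : ℕ → Ω → ℝ)
    (hZ : ∀ k ω, Z k ω = (∏ j ∈ Finset.Ico 1 k, ε j ω) * Zt k ω) :
    ∀ k, 1 ≤ k → k < K → MIr P Y (Z (k + 1)) ≤ MIr P Y (Z k) := by
  intro k hk1 hkK
  have hmem_k : k ∈ Finset.Icc 1 K := Finset.mem_Icc.2 ⟨hk1, le_of_lt hkK⟩
  have hmem_k1 : k + 1 ∈ Finset.Icc 1 K := Finset.mem_Icc.2 ⟨by omega, by omega⟩
  have hsub0 : Finset.Ico 1 k ⊆ Finset.Icc 1 (K - 1) := by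
    intro j hj; rw [Finset.mem_Ico] at hj; rw [Finset.mem_Icc]; omega
  have hsub1 : Finset.Ico 1 (k + 1) ⊆ Finset.Icc 1 (K - 1) := by
    intro j hj; rw [Finset.mem_Ico] at hj; rw [Finset.mem_Icc]; omega
  have hεmem : ∀ ω : Ω, ∀ i ∈ Finset.Icc 1 (K - 1), ε i ω ∈ ({0, 1} : Finset ℝ) := by
    intro ω i _; rcases hε01 i ω with h | h <;> simp [h]
  -- Step A : marginalize the ε-pattern out of the independence hypothesis
  have stepA : ∀ s' : Finset ℕ, s' ⊆ Finset.Icc 1 (K - 1) → ∀ (y : 𝒴) (v : ℕ → ℝ),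
      (∑ ω, if (∀ i ∈ s', ε i ω = 1) ∧ Y ω = y ∧ (∀ k' ∈ Finset.Icc 1 K, Zt k' ω = v k')
        then P ω else 0)
      = (∑ ω, if Y ω = y ∧ (∀ k' ∈ Finset.Icc 1 K, Zt k' ω = v k') then P ω else 0) *
        (∑ ω, if (∀ i ∈ s', ε i ω = 1) then P ω else 0) := by
    intro s' hs' y v
    have hiff : ∀ ω : Ω,
        (∀ i ∈ s', (if h : i ∈ Finset.Icc 1 (K - 1) then ε i ω else (0:ℝ)) = 1)
          ↔ (∀ i ∈ s', ε i ω = 1) := by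
      intro ω
      refine ⟨fun h i hi => ?_, fun h i hi => ?_⟩
      · have h2 := h i hi; rwa [dif_pos (hs' hi)] at h2
      · rw [dif_pos (hs' hi)]; exact h i hi
    refine Eq.trans ?_ ((marg_general P (Finset.Icc 1 (K - 1))
      (fun _ => ({0, 1} : Finset ℝ)) (fun ω i => ε i ω) (fun ω i => ε i ω)
      (fun ω i hi => hεmem ω i hi) (fun ω i hi => hεmem ω i hi)
      (fun f => ∀ i ∈ s', f i = 1)
      (fun ω => if Y ω = y ∧ (∀ k' ∈ Finset.Icc 1 K, Zt k' ω = v k') then P ω else 0)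
      P
      (∑ ω, if Y ω = y ∧ (∀ k' ∈ Finset.Icc 1 K, Zt k' ω = v k') then P ω else 0)
      ?_).trans ?_)
    · beta_reduce
      refine Finset.sum_congr rfl fun ω _ => ?_
      exact ite_nested_iff (and_congr (hiff ω).symm Iff.rfl) _
    · intro τ _
      have hind := hindep (fun j => if h : j ∈ Finset.Icc 1 (K - 1) then τ j h else 0) y v
      beta_reduce at hind ⊢
      exact (Finset.sum_congr rfl fun ω _ => (ite_nested_iff Iff.rfl _).symm).trans
        (hind.trans ((mul_comm _ _).trans (congrArg₂ (· * ·)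
          (sum_ite_icongr _ fun _ => Iff.rfl) (sum_ite_icongr _ fun _ => Iff.rfl))))
    · beta_reduce
      refine congrArg₂ (· * ·) rfl ?_
      refine Finset.sum_congr rfl fun ω _ => ?_
      exact ite_iff' (hiff ω) _
  -- Step B : marginalize the Zt-vector down to a single coordinate
  have stepB : ∀ s' : Finset ℕ, s' ⊆ Finset.Icc 1 (K - 1) → ∀ (y : 𝒴) (m : ℕ),
      m ∈ Finset.Icc 1 K → ∀ z : ℝ,
      (∑ ω, if (∀ i ∈ s', ε i ω = 1) ∧ Y ω = y ∧ Zt m ω = z then P ω else 0)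
      = (∑ ω, if Y ω = y ∧ Zt m ω = z then P ω else 0) *
        (∑ ω, if (∀ i ∈ s', ε i ω = 1) then P ω else 0) := by
    intro s' hs' y m hm z
    refine Eq.trans ?_ ((marg_general P (Finset.Icc 1 K)
      (fun j => Finset.image (Zt j) Finset.univ) (fun ω i => Zt i ω) (fun ω i => Zt i ω)
      (fun ω i _ => Finset.mem_image_of_mem _ (Finset.mem_univ ω))
      (fun ω i _ => Finset.mem_image_of_mem _ (Finset.mem_univ ω))
      (fun f => f m = z)
      (fun ω => if (∀ i ∈ s', ε i ω = 1) ∧ Y ω = y then P ω else 0)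
      (fun ω => if Y ω = y then P ω else 0)
      (∑ ω, if (∀ i ∈ s', ε i ω = 1) then P ω else 0)
      ?_).trans ?_)
    · beta_reduce
      refine Finset.sum_congr rfl fun ω _ => ?_
      have hdm : ((if h : m ∈ Finset.Icc 1 K then Zt m ω else (0:ℝ)) = z)
          ↔ Zt m ω = z := by rw [dif_pos hm]
      refine ite_nested_iff ⟨?_, ?_⟩ _
      · rintro ⟨ha, hb, hz3⟩; exact ⟨hdm.2 hz3, ha, hb⟩
      · rintro ⟨hq, ha, hb⟩; exact ⟨ha, hb, hdm.1 hq⟩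
    · intro τ _
      have hstep := stepA s' hs' y (fun j => if h : j ∈ Finset.Icc 1 K then τ j h else 0)
      beta_reduce at hstep ⊢
      have hiffB : ∀ ω : Ω, ((∀ i ∈ s', ε i ω = 1) ∧ Y ω = y ∧
            (∀ k' ∈ Finset.Icc 1 K,
              Zt k' ω = if h : k' ∈ Finset.Icc 1 K then τ k' h else 0))
          ↔ ((∀ i ∈ Finset.Icc 1 K,
              Zt i ω = if h : i ∈ Finset.Icc 1 K then τ i h else 0) ∧
            ((∀ i ∈ s', ε i ω = 1) ∧ Y ω = y)) := fun ω => by tauto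
      exact (Finset.sum_congr rfl fun ω _ => (ite_nested_iff (hiffB ω) _).symm).trans
        (hstep.trans ((mul_comm _ _).trans (congrArg₂ (· * ·)
          (sum_ite_icongr _ fun _ => Iff.rfl)
          (Finset.sum_congr rfl fun ω _ => ite_nested_iff and_comm _))))
    · beta_reduce
      rw [mul_comm]
      refine congrArg₂ (· * ·) ?_ rfl
      refine Finset.sum_congr rfl fun ω _ => ?_
      have hdm : ((if h : m ∈ Finset.Icc 1 K then Zt m ω else (0:ℝ)) = z)
          ↔ Zt m ω = z := by rw [dif_pos hm]
      refine ((ite_nested_iff ⟨?_, ?_⟩ _).symm)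
      · rintro ⟨hb, hz3⟩; exact ⟨hdm.2 hz3, hb⟩
      · rintro ⟨hq, hb⟩; exact ⟨hb, hdm.1 hq⟩
  -- Step C : exchangeability at a single coordinate
  have hσ : ∀ j, j ∉ Finset.Icc 1 K → (Equiv.swap k (k + 1)) j = j := by
    intro j hj
    apply Equiv.swap_apply_of_ne_of_ne
    · rintro rfl; exact hj hmem_k
    · rintro rfl; exact hj hmem_k1
  have stepC : ∀ (y : 𝒴) (z : ℝ),
      (∑ ω, if Y ω = y ∧ Zt (k + 1) ω = z then P ω else 0)
        = ∑ ω, if Y ω = y ∧ Zt k ω = z then P ω else 0 := by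
    intro y z
    have hswapk : (Equiv.swap k (k + 1)) k = k + 1 := Equiv.swap_apply_left k (k + 1)
    refine Eq.trans ?_ ((marg_general P (Finset.Icc 1 K)
      (fun j => Finset.image (Zt j) Finset.univ ∪
        Finset.image (Zt ((Equiv.swap k (k + 1)) j)) Finset.univ)
      (fun ω i => Zt ((Equiv.swap k (k + 1)) i) ω) (fun ω i => Zt i ω)
      (fun ω i _ => Finset.mem_union_right _ (Finset.mem_image_of_mem _ (Finset.mem_univ ω)))
      (fun ω i _ => Finset.mem_union_left _ (Finset.mem_image_of_mem _ (Finset.mem_univ ω)))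
      (fun f => f k = z)
      (fun ω => if Y ω = y then P ω else 0)
      (fun ω => if Y ω = y then P ω else 0)
      1 ?_).trans ?_)
    · beta_reduce
      refine Finset.sum_congr rfl fun ω _ => ?_
      have hdm : ((if h : k ∈ Finset.Icc 1 K
            then Zt ((Equiv.swap k (k + 1)) k) ω else (0:ℝ)) = z)
          ↔ Zt (k + 1) ω = z := by rw [dif_pos hmem_k, hswapk]
      refine ite_nested_iff ⟨?_, ?_⟩ _
      · rintro ⟨hb, hz3⟩; exact ⟨hdm.2 hz3, hb⟩
      · rintro ⟨hq, hb⟩; exact ⟨hb, hdm.1 hq⟩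
    · intro τ _
      have hexc := hexch (Equiv.swap k (k + 1)) hσ y
        (fun j => if h : j ∈ Finset.Icc 1 K then τ j h else 0)
      beta_reduce at hexc ⊢
      exact (Finset.sum_congr rfl fun ω _ => (ite_nested_iff and_comm _).symm).trans
        (hexc.trans ((Finset.sum_congr rfl fun ω _ => ite_nested_iff and_comm _).trans
          (one_mul _).symm))
    · beta_reduce
      rw [one_mul]
      refine Finset.sum_congr rfl fun ω _ => ?_
      have hdm : ((if h : k ∈ Finset.Icc 1 K then Zt k ω else (0:ℝ)) = z)
          ↔ Zt k ω = z := by rw [dif_pos hmem_k]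
      refine ((ite_nested_iff ⟨?_, ?_⟩ _).symm)
      · rintro ⟨hb, hz3⟩; exact ⟨hdm.2 hz3, hb⟩
      · rintro ⟨hq, hb⟩; exact ⟨hb, hdm.1 hq⟩
  -- rewriting the masked variables
  have hZc : ∀ m, ∀ z : ℝ, z ≠ 0 → ∀ ω : Ω,
      Z m ω = z ↔ ((∀ j ∈ Finset.Ico 1 m, ε j ω = 1) ∧ Zt m ω = z) := by
    intro m z hz ω
    rw [hZ]
    by_cases hall : ∀ j ∈ Finset.Ico 1 m, ε j ω = 1
    · rw [Finset.prod_congr rfl hall, Finset.prod_const_one, one_mul]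
      exact ⟨fun h => ⟨hall, h⟩, fun h => h.2⟩
    · have hex : ∃ j ∈ Finset.Ico 1 m, ε j ω ≠ 1 := by
        push_neg at hall; exact hall
      obtain ⟨j, hj, hj1⟩ := hex
      have hj0 : ε j ω = 0 := (hε01 j ω).resolve_right hj1
      rw [Finset.prod_eq_zero hj hj0, zero_mul]
      constructor
      · intro h0; exact absurd h0.symm hz
      · rintro ⟨hall2, -⟩; exact absurd (hall2 j hj) hj1
  -- the two joint-distribution identities
  have hA : ∀ (y : 𝒴) (z : ℝ), z ≠ 0 → jointP P Y (Z k) y z =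
      (∑ ω, if Y ω = y ∧ Zt k ω = z then P ω else 0) *
      (∑ ω, if (∀ i ∈ Finset.Ico 1 k, ε i ω = 1) then P ω else 0) := by
    intro y z hz
    have e : jointP P Y (Z k) y z = ∑ ω, if (∀ i ∈ Finset.Ico 1 k, ε i ω = 1) ∧
        Y ω = y ∧ Zt k ω = z then P ω else 0 := by
      unfold jointP
      refine Finset.sum_congr rfl fun ω _ => ite_iff' ?_ _
      rw [hZc k z hz ω]
      tauto
    rw [e]
    exact (sum_ite_icongr _ fun _ => Iff.rfl).trans
      ((stepB (Finset.Ico 1 k) hsub0 y k hmem_k z).trans (congrArg₂ (· * ·)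
        (sum_ite_icongr _ fun _ => Iff.rfl) (sum_ite_icongr _ fun _ => Iff.rfl)))
  have hB : ∀ (y : 𝒴) (z : ℝ), z ≠ 0 → jointP P Y (Z (k + 1)) y z =
      (∑ ω, if Y ω = y ∧ Zt k ω = z then P ω else 0) *
      (∑ ω, if (∀ i ∈ Finset.Ico 1 (k + 1), ε i ω = 1) then P ω else 0) := by
    intro y z hz
    have e : jointP P Y (Z (k + 1)) y z = ∑ ω, if (∀ i ∈ Finset.Ico 1 (k + 1), ε i ω = 1) ∧
        Y ω = y ∧ Zt (k + 1) ω = z then P ω else 0 := by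
      unfold jointP
      refine Finset.sum_congr rfl fun ω _ => ite_iff' ?_ _
      rw [hZc (k + 1) z hz ω]
      tauto
    rw [e]
    exact (sum_ite_icongr _ fun _ => Iff.rfl).trans
      ((stepB (Finset.Ico 1 (k + 1)) hsub1 y (k + 1) hmem_k1 z).trans (congrArg₂ (· * ·)
        ((sum_ite_icongr _ fun _ => Iff.rfl).trans ((stepC y z).trans
          (sum_ite_icongr _ fun _ => Iff.rfl)))
        (sum_ite_icongr _ fun _ => Iff.rfl)))
  -- basic constants
  have hc1nn : (0:ℝ) ≤ ∑ ω, if (∀ i ∈ Finset.Ico 1 (k + 1), ε i ω = 1) then P ω else 0 :=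
    Finset.sum_nonneg fun ω _ => ite_nonneg0 (hP ω)
  have hc0nn : (0:ℝ) ≤ ∑ ω, if (∀ i ∈ Finset.Ico 1 k, ε i ω = 1) then P ω else 0 :=
    Finset.sum_nonneg fun ω _ => ite_nonneg0 (hP ω)
  have hc1c0 : (∑ ω, if (∀ i ∈ Finset.Ico 1 (k + 1), ε i ω = 1) then P ω else 0)
      ≤ ∑ ω, if (∀ i ∈ Finset.Ico 1 k, ε i ω = 1) then P ω else 0 := by
    refine Finset.sum_le_sum fun ω _ => ?_
    by_cases h1 : (∀ i ∈ Finset.Ico 1 (k + 1), ε i ω = 1)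
    · rw [if_pos h1, if_pos (fun i hi => h1 i (Finset.Ico_subset_Ico_right (by omega) hi))]
    · rw [if_neg h1]
      exact ite_nonneg0 (hP ω)
  -- the common support
  set T : Finset ℝ := insert (0:ℝ)
    (Finset.image (Z k) Finset.univ ∪ Finset.image (Z (k + 1)) Finset.univ) with hTdef
  have h0T : (0:ℝ) ∈ T := Finset.mem_insert_self _ _
  have hTk : Finset.image (Z k) Finset.univ ⊆ T :=
    fun z hz => Finset.mem_insert_of_mem (Finset.mem_union_left _ hz)
  have hTk1 : Finset.image (Z (k + 1)) Finset.univ ⊆ T :=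
    fun z hz => Finset.mem_insert_of_mem (Finset.mem_union_right _ hz)
  rw [MIr_eq P Y (Z k) T hTk, MIr_eq P Y (Z (k + 1)) T hTk1]
  -- set up lambda
  set c0 : ℝ := ∑ ω, if (∀ i ∈ Finset.Ico 1 k, ε i ω = 1) then P ω else 0 with hc0def
  set c1 : ℝ := ∑ ω, if (∀ i ∈ Finset.Ico 1 (k + 1), ε i ω = 1) then P ω else 0 with hc1def
  set lam : ℝ := if c0 = 0 then 1 else c1 / c0 with hlamdef
  have hl0 : 0 ≤ lam := by
    rw [hlamdef]
    split_ifs with h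
    · norm_num
    · exact div_nonneg hc1nn hc0nn
  have hl1 : lam ≤ 1 := by
    rw [hlamdef]
    split_ifs with h
    · exact le_refl 1
    · exact div_le_one_of_le₀ hc1c0 hc0nn
  have hqlam : ∀ (y : 𝒴) (z : ℝ), z ≠ 0 →
      jointP P Y (Z (k + 1)) y z = lam * jointP P Y (Z k) y z := by
    intro y z hz
    rw [hA y z hz, hB y z hz, hlamdef]
    split_ifs with h
    · have hc10 : c1 = 0 := le_antisymm (h ▸ hc1c0) hc1nn
      rw [h, hc10]
      ring
    · field_simp
  -- apply the analytic inequality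
  refine analytic T h0T (fun y z => jointP P Y (Z k) y z)
    (fun y z => jointP P Y (Z (k + 1)) y z)
    (fun y => ∑ ω, if Y ω = y then P ω else 0) lam
    (fun y z => jointP_nonneg P hP Y (Z k) y z)
    (fun y => Finset.sum_nonneg fun ω _ => ite_nonneg0 (hP ω))
    hl0 hl1
    (fun y => jointP_row P Y (Z k) y T
      (fun ω => hTk (Finset.mem_image_of_mem _ (Finset.mem_univ ω))))
    (fun y => jointP_row P Y (Z (k + 1)) y T
      (fun ω => hTk1 (Finset.mem_image_of_mem _ (Finset.mem_univ ω))))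
    ?_
    (fun y z _ hz => hqlam y z hz)
  have hcoll : ∀ ω : Ω, (∑ y, if Y ω = y then P ω else 0) = P ω := fun ω => by
    rw [Finset.sum_ite_eq Finset.univ (Y ω) (fun _ => P ω), if_pos (Finset.mem_univ _)]
  beta_reduce
  rw [Finset.sum_comm]
  exact (Finset.sum_congr rfl fun ω _ => hcoll ω).trans hP1

end
end
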